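/- arXiv:1811.03125 — 2 statements merged into one kernel-verified Lean document; each statement's English description precedes it below -/
import Mathlib

section
/- Let x ∈ L²(Ω, ℝ^m), z ∈ L²(Ω, ℝ^q) and S ∈ ℝ^{m×q}. Then ‖x − S z‖²_Ω = ‖E_{xx}^{1/2}‖² − ‖E_{xz}(E_{zz}^{1/2})^†‖² + ‖S E_{zz}^{1/2} − E_{xz}(E_{zz}^{1/2})^†‖², where ‖·‖ is the Frobenius norm. -/
open MeasureTheory Matrix Finset Filter

noncomputable section

/-- The covariance matrix `E_{xy}` of two random vectors. -/
def covM {Ω : Type} [MeasurableSpace Ω] (μ : Measure Ω) {m n : ℕ}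
    (x : Ω → Fin m → ℝ) (y : Ω → Fin n → ℝ) : Matrix (Fin m) (Fin n) ℝ :=
  Matrix.of fun i j => ∫ ω, x ω i * y ω j ∂μ

/-- The squared norm `‖x‖²_Ω` of a random vector. -/
def sqnormOm {Ω : Type} [MeasurableSpace Ω] (μ : Measure Ω) {m : ℕ}
    (x : Ω → Fin m → ℝ) : ℝ :=
  ∫ ω, ∑ j, (x ω j) ^ 2 ∂μ

/-- The Moore–Penrose conditions. -/
def IsMoorePenrose {m n : ℕ} (A : Matrix (Fin m) (Fin n) ℝ)
    (B : Matrix (Fin n) (Fin m) ℝ) : Prop :=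
  A * B * A = A ∧ B * A * B = B ∧ (A * B)ᵀ = A * B ∧ (B * A)ᵀ = B * A

/-- The Moore–Penrose pseudoinverse `M^†`. -/
def mpinv {m n : ℕ} (A : Matrix (Fin m) (Fin n) ℝ) : Matrix (Fin n) (Fin m) ℝ :=
  Classical.epsilon fun B => IsMoorePenrose A B

/-- The symmetric positive semidefinite square root `M^{1/2}` of a PSD matrix. -/
def msqrtM {n : ℕ} (M : Matrix (Fin n) (Fin n) ℝ) : Matrix (Fin n) (Fin n) ℝ :=
  Classical.epsilon fun S => S.PosSemidef ∧ S * S = M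

/-- Squared Frobenius norm. -/
def frobSq {m n : ℕ} (A : Matrix (Fin m) (Fin n) ℝ) : ℝ := ∑ i, ∑ j, (A i j) ^ 2

/-- `(u, v, σ)` is a singular value decomposition of `A`:
`A = ∑ k σ_k u_k v_kᵀ` with orthonormal `u`'s and `v`'s and
nonnegative singular values in decreasing order. -/
def IsSVDOf {m n : ℕ} (A : Matrix (Fin m) (Fin n) ℝ)
    (u : ℕ → Fin m → ℝ) (v : ℕ → Fin n → ℝ) (σ : ℕ → ℝ) : Prop :=
  (∀ k l, k < min m n → l < min m n → u k ⬝ᵥ u l = if k = l then (1 : ℝ) else 0) ∧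
  (∀ k l, k < min m n → l < min m n → v k ⬝ᵥ v l = if k = l then (1 : ℝ) else 0) ∧
  (∀ k, 0 ≤ σ k) ∧ Antitone σ ∧ (∀ k, min m n ≤ k → σ k = 0) ∧
  A = ∑ k ∈ Finset.range (min m n), σ k • vecMulVec (u k) (v k)


section Aux

lemma exists_mp {n : ℕ} (A : Matrix (Fin n) (Fin n) ℝ) (hA : A.IsHermitian) :
    ∃ B, IsMoorePenrose A B := by
  classical
  set V : Matrix (Fin n) (Fin n) ℝ := (hA.eigenvectorUnitary : Matrix (Fin n) (Fin n) ℝ) with hVdef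
  have hV2 : Vᴴ * V = 1 := (Matrix.mem_unitaryGroup_iff').mp (hA.eigenvectorUnitary).2
  set f : Fin n → ℝ := RCLike.ofReal ∘ hA.eigenvalues with hfdef
  have hspec : A = V * diagonal f * Vᴴ := hA.spectral_theorem
  have hmul : ∀ (g h : Fin n → ℝ),
      (V * diagonal g * Vᴴ) * (V * diagonal h * Vᴴ)
        = V * diagonal (fun i => g i * h i) * Vᴴ := by
    intro g h
    rw [← diagonal_mul_diagonal g h]
    simp only [Matrix.mul_assoc]
    rw [← Matrix.mul_assoc Vᴴ V, hV2, Matrix.one_mul]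
  have htr : ∀ (g : Fin n → ℝ), (V * diagonal g * Vᴴ)ᵀ = V * diagonal g * Vᴴ := by
    intro g
    have h1 : (V * diagonal g * Vᴴ)ᴴ = V * diagonal g * Vᴴ := by
      simp [conjTranspose_mul, Matrix.mul_assoc, diagonal_conjTranspose]
    rw [← conjTranspose_eq_transpose_of_trivial]
    exact h1
  refine ⟨V * diagonal (fun i => (f i)⁻¹) * Vᴴ, ?_, ?_, ?_, ?_⟩
  · rw [hspec, hmul, hmul]
    have he : (fun i => f i * (f i)⁻¹ * f i) = f := by
      funext i
      rcases eq_or_ne (f i) 0 with h | h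
      · simp [h]
      · field_simp
    rw [he]
  · rw [hspec, hmul, hmul]
    have he : (fun i => (f i)⁻¹ * f i * (f i)⁻¹) = fun i => (f i)⁻¹ := by
      funext i
      rcases eq_or_ne (f i) 0 with h | h
      · simp [h]
      · field_simp
    rw [he]
  · rw [hspec, hmul, htr]
  · rw [hspec, hmul, htr]

lemma frobSq_eq {m n : ℕ} (A : Matrix (Fin m) (Fin n) ℝ) :
    frobSq A = Matrix.trace (A * Aᵀ) := by
  simp [frobSq, Matrix.trace, Matrix.mul_apply, Matrix.diag, sq]

lemma matrix_side {m q : ℕ} (Exx Q : Matrix (Fin m) (Fin m) ℝ)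
    (Exz S : Matrix (Fin m) (Fin q) ℝ) (Ezz R B : Matrix (Fin q) (Fin q) ℝ)
    (hQs : Qᵀ = Q) (hQ2 : Q * Q = Exx) (hRs : Rᵀ = R) (hR2 : R * R = Ezz)
    (hkey : Exz * (B * R) = Exz) :
    frobSq Q - frobSq (Exz * B) + frobSq (S * R - Exz * B)
      = Matrix.trace Exx - 2 * Matrix.trace (Exz * Sᵀ) + Matrix.trace (S * Ezz * Sᵀ) := by
  set T := Exz * B with hT
  have e1 : frobSq Q = Matrix.trace Exx := by rw [frobSq_eq, hQs, hQ2]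
  have hTRS : Matrix.trace (T * (S * R)ᵀ) = Matrix.trace (Exz * Sᵀ) := by
    rw [transpose_mul, hRs]
    have h : T * (R * Sᵀ) = (Exz * (B * R)) * Sᵀ := by
      rw [hT]; simp only [Matrix.mul_assoc]
    rw [h, hkey]
  have hSRT : Matrix.trace ((S * R) * Tᵀ) = Matrix.trace (Exz * Sᵀ) := by
    have h : ((S * R) * Tᵀ)ᵀ = T * (S * R)ᵀ := by
      rw [transpose_mul, transpose_transpose]
    rw [← Matrix.trace_transpose ((S * R) * Tᵀ), h, hTRS]
  have h4 : Matrix.trace ((S * R) * (S * R)ᵀ) = Matrix.trace (S * Ezz * Sᵀ) := by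
    rw [transpose_mul, hRs]
    have h : S * R * (R * Sᵀ) = S * (R * R) * Sᵀ := by simp only [Matrix.mul_assoc]
    rw [h, hR2]
  have e3 : frobSq (S * R - T)
      = Matrix.trace (S * Ezz * Sᵀ) - Matrix.trace (Exz * Sᵀ) - Matrix.trace (Exz * Sᵀ)
        + Matrix.trace (T * Tᵀ) := by
    rw [frobSq_eq, transpose_sub, Matrix.sub_mul, Matrix.mul_sub, Matrix.mul_sub,
      trace_sub, trace_sub, trace_sub, h4, hSRT, hTRS]
    ring
  rw [e1, e3, frobSq_eq T]
  ring

variable {Ω : Type} [MeasurableSpace Ω] {μ : Measure Ω}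

lemma memLp_comp {m : ℕ} {x : Ω → Fin m → ℝ} (hx : MemLp x 2 μ) (i : Fin m) :
    MemLp (fun ω => x ω i) 2 μ :=
  hx.of_le ((continuous_apply i).comp_aestronglyMeasurable hx.1)
    (ae_of_all _ fun ω => norm_le_pi_norm (x ω) i)

lemma int_mul {f g : Ω → ℝ} (hf : MemLp f 2 μ) (hg : MemLp g 2 μ) :
    Integrable (fun ω => f ω * g ω) μ := by
  have h1 := (hf.add hg).integrable_sq
  have h2 := hf.integrable_sq
  have h3 := hg.integrable_sq
  have h4 : (fun ω => f ω * g ω)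
      = fun ω => (((fun ω => (f ω + g ω) ^ 2) ω - (fun ω => f ω ^ 2) ω)
          - (fun ω => g ω ^ 2) ω) / 2 := by
    funext ω; simp; ring
  rw [h4]
  exact ((h1.sub h2).sub h3).div_const 2

lemma covM_quad {q : ℕ} {z : Ω → Fin q → ℝ} (hz : MemLp z 2 μ) (v : Fin q → ℝ) :
    v ⬝ᵥ ((covM μ z z) *ᵥ v) = ∫ ω, (∑ k, v k * z ω k) ^ 2 ∂μ := by
  have hzz : ∀ j k : Fin q, Integrable (fun ω => z ω j * z ω k) μ := fun j k =>
    int_mul (memLp_comp hz j) (memLp_comp hz k)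
  have key : ∀ ω, (∑ k, v k * z ω k) ^ 2 = ∑ j, ∑ k, (v j * v k) * (z ω j * z ω k) := by
    intro ω
    rw [sq, Finset.sum_mul_sum]
    exact Finset.sum_congr rfl fun j _ => Finset.sum_congr rfl fun k _ => by ring
  calc v ⬝ᵥ ((covM μ z z) *ᵥ v)
      = ∑ j, ∑ k, (v j * v k) * ∫ ω, z ω j * z ω k ∂μ := by
        simp only [dotProduct, mulVec, covM, of_apply, Finset.mul_sum]
        exact Finset.sum_congr rfl fun j _ => Finset.sum_congr rfl fun k _ => by ring
    _ = ∑ j, ∫ ω, ∑ k, (v j * v k) * (z ω j * z ω k) ∂μ := by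
        refine Finset.sum_congr rfl fun j _ => ?_
        rw [integral_finset_sum _ fun k _ => (hzz j k).const_mul _]
        exact Finset.sum_congr rfl fun k _ => (integral_const_mul _ _).symm
    _ = ∫ ω, ∑ j, ∑ k, (v j * v k) * (z ω j * z ω k) ∂μ := by
        rw [integral_finset_sum _ fun j _ =>
          integrable_finset_sum _ fun k _ => (hzz j k).const_mul _]
    _ = ∫ ω, (∑ k, v k * z ω k) ^ 2 ∂μ := by
        simp only [key]

lemma covM_psd {q : ℕ} {z : Ω → Fin q → ℝ} (hz : MemLp z 2 μ) :
    (covM μ z z).PosSemidef := by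
  refine posSemidef_iff_dotProduct_mulVec.mpr ⟨?_, ?_⟩
  · ext i j
    simp only [conjTranspose_apply, covM, of_apply, star_trivial]
    simp_rw [mul_comm]
  · intro v
    rw [star_trivial, covM_quad hz v]
    exact integral_nonneg fun ω => sq_nonneg _

lemma cov_kernel {m q : ℕ} {x : Ω → Fin m → ℝ} {z : Ω → Fin q → ℝ}
    (hx : MemLp x 2 μ) (hz : MemLp z 2 μ) (v : Fin q → ℝ)
    (hv : covM μ z z *ᵥ v = 0) (i : Fin m) :
    ∑ k, covM μ x z i k * v k = 0 := by
  have hg : MemLp (fun ω => ∑ k, v k * z ω k) 2 μ := by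
    have h5 := memLp_finset_sum' (μ := μ) (p := 2) Finset.univ
      (f := fun k ω => v k * z ω k) fun k _ => (memLp_comp hz k).const_mul (v k)
    have heq : (∑ k : Fin q, fun ω => v k * z ω k) = fun ω => ∑ k, v k * z ω k := by
      funext ω; simp
    rwa [heq] at h5
  have hint := hg.integrable_sq
  have h0 : ∫ ω, (∑ k, v k * z ω k) ^ 2 ∂μ = 0 := by
    rw [← covM_quad hz v, hv, dotProduct_zero]
  have hae : (fun ω => ∑ k, v k * z ω k) =ᵐ[μ] 0 := by
    have h1 := (integral_eq_zero_iff_of_nonneg (fun ω => sq_nonneg _) hint).mp h0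
    filter_upwards [h1] with ω hω
    simpa using pow_eq_zero_iff two_ne_zero |>.mp hω
  calc ∑ k, covM μ x z i k * v k
      = ∑ k, ∫ ω, x ω i * z ω k * v k ∂μ :=
        Finset.sum_congr rfl fun k _ => (integral_mul_const _ _).symm
    _ = ∫ ω, ∑ k, x ω i * z ω k * v k ∂μ :=
        (integral_finset_sum _ fun k _ =>
          (int_mul (memLp_comp hx i) (memLp_comp hz k)).mul_const _).symm
    _ = ∫ ω, x ω i * ∑ k, v k * z ω k ∂μ := by
        congr 1; funext ω
        rw [Finset.mul_sum]
        exact Finset.sum_congr rfl fun k _ => by ring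
    _ = 0 := by
        have h2 : (fun ω => x ω i * ∑ k, v k * z ω k) =ᵐ[μ] 0 := by
          filter_upwards [hae] with ω h
          simp only [Pi.zero_apply] at h ⊢
          rw [h, mul_zero]
        rw [integral_congr_ae h2]; simp

lemma sqnorm_expand {m q : ℕ} {x : Ω → Fin m → ℝ} {z : Ω → Fin q → ℝ}
    (hx : MemLp x 2 μ) (hz : MemLp z 2 μ) (S : Matrix (Fin m) (Fin q) ℝ) :
    sqnormOm μ (fun ω => x ω - S *ᵥ z ω)
      = (∑ i, covM μ x x i i) - 2 * (∑ i, ∑ j, S i j * covM μ x z i j)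
        + ∑ i, ∑ j, ∑ k, S i j * S i k * covM μ z z j k := by
  have hpt : ∀ ω, ∑ i, ((x ω - S *ᵥ z ω) i) ^ 2
      = (∑ i, x ω i ^ 2) - 2 * (∑ i, ∑ j, S i j * (x ω i * z ω j))
        + ∑ i, ∑ j, ∑ k, S i j * S i k * (z ω j * z ω k) := by
    intro ω
    have h1 : ∀ i : Fin m, ((x ω - S *ᵥ z ω) i) ^ 2
        = x ω i ^ 2 - 2 * (∑ j, S i j * (x ω i * z ω j))
          + ∑ j, ∑ k, S i j * S i k * (z ω j * z ω k) := by
      intro i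
      simp only [Pi.sub_apply, mulVec, dotProduct]
      rw [sub_sq, Finset.mul_sum, sq (∑ j, S i j * z ω j), Finset.sum_mul_sum]
      congr 1
      · congr 1
        rw [Finset.mul_sum]
        exact Finset.sum_congr rfl fun j _ => by ring
      · exact Finset.sum_congr rfl fun j _ => Finset.sum_congr rfl fun k _ => by ring
    rw [Finset.sum_congr rfl fun i _ => h1 i, Finset.sum_add_distrib, Finset.sum_sub_distrib,
      ← Finset.mul_sum]
  have IA : Integrable (fun ω => ∑ i, x ω i ^ 2) μ :=
    integrable_finset_sum _ fun i _ => (memLp_comp hx i).integrable_sq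
  have IB : Integrable (fun ω => ∑ i, ∑ j, S i j * (x ω i * z ω j)) μ :=
    integrable_finset_sum _ fun i _ => integrable_finset_sum _ fun j _ =>
      ((int_mul (memLp_comp hx i) (memLp_comp hz j)).const_mul _)
  have IC : Integrable (fun ω => ∑ i, ∑ j, ∑ k, S i j * S i k * (z ω j * z ω k)) μ :=
    integrable_finset_sum _ fun i _ => integrable_finset_sum _ fun j _ =>
      integrable_finset_sum _ fun k _ =>
        ((int_mul (memLp_comp hz j) (memLp_comp hz k)).const_mul _)
  have IB2 : Integrable (fun ω => 2 * ∑ i, ∑ j, S i j * (x ω i * z ω j)) μ :=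
    IB.const_mul 2
  have IAB : Integrable (fun ω => (∑ i, x ω i ^ 2)
      - 2 * ∑ i, ∑ j, S i j * (x ω i * z ω j)) μ := IA.sub IB2
  have hfun : (fun ω => ∑ i, ((x ω - S *ᵥ z ω) i) ^ 2)
      = fun ω => ((∑ i, x ω i ^ 2)
          - 2 * ∑ i, ∑ j, S i j * (x ω i * z ω j))
        + ∑ i, ∑ j, ∑ k, S i j * S i k * (z ω j * z ω k) := funext hpt
  show (∫ ω, ∑ i, ((x ω - S *ᵥ z ω) i) ^ 2 ∂μ) = _
  rw [hfun, integral_add IAB IC, integral_sub IA IB2,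
    integral_const_mul, integral_finset_sum _ (fun i _ => (memLp_comp hx i).integrable_sq),
    integral_finset_sum _ (f := fun i ω => ∑ j, S i j * (x ω i * z ω j))
      (fun i _ => integrable_finset_sum _ fun j _ =>
      ((int_mul (memLp_comp hx i) (memLp_comp hz j)).const_mul _)),
    integral_finset_sum _ (f := fun i ω => ∑ j, ∑ k, S i j * S i k * (z ω j * z ω k))
      (fun i _ => integrable_finset_sum _ fun j _ =>
      integrable_finset_sum _ fun k _ =>
        ((int_mul (memLp_comp hz j) (memLp_comp hz k)).const_mul _))]
  congr 1
  · congr 1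
    · exact Finset.sum_congr rfl fun i _ => by simp [covM, sq]
    · congr 1
      refine Finset.sum_congr rfl fun i _ => ?_
      rw [integral_finset_sum _ fun j _ =>
        ((int_mul (memLp_comp hx i) (memLp_comp hz j)).const_mul _)]
      exact Finset.sum_congr rfl fun j _ => by rw [integral_const_mul]; rfl
  · refine Finset.sum_congr rfl fun i _ => ?_
    rw [integral_finset_sum _ fun j _ => integrable_finset_sum _ fun k _ =>
      ((int_mul (memLp_comp hz j) (memLp_comp hz k)).const_mul _)]
    refine Finset.sum_congr rfl fun j _ => ?_
    rw [integral_finset_sum _ fun k _ =>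
      ((int_mul (memLp_comp hz j) (memLp_comp hz k)).const_mul _)]
    exact Finset.sum_congr rfl fun k _ => by rw [integral_const_mul]; rfl

end Aux

/-- `‖x − Sz‖²_Ω = ‖E_{xx}^{1/2}‖² − ‖E_{xz}(E_{zz}^{1/2})^†‖²
+ ‖S E_{zz}^{1/2} − E_{xz}(E_{zz}^{1/2})^†‖²` (Frobenius norms). -/
theorem stmt4 {Ω : Type} [MeasurableSpace Ω] (μ : Measure Ω) [IsProbabilityMeasure μ]
    {m q : ℕ} (x : Ω → Fin m → ℝ) (z : Ω → Fin q → ℝ)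
    (hx : MemLp x 2 μ) (hz : MemLp z 2 μ)
    (S : Matrix (Fin m) (Fin q) ℝ) :
    sqnormOm μ (fun ω => x ω - S *ᵥ z ω)
      = frobSq (msqrtM (covM μ x x))
        - frobSq (covM μ x z * mpinv (msqrtM (covM μ z z)))
        + frobSq (S * msqrtM (covM μ z z) - covM μ x z * mpinv (msqrtM (covM μ z z))) := by
  have hxx_psd : (covM μ x x).PosSemidef := covM_psd hx
  have hzz_psd : (covM μ z z).PosSemidef := covM_psd hz
  have hQ : (msqrtM (covM μ x x)).PosSemidef
      ∧ msqrtM (covM μ x x) * msqrtM (covM μ x x) = covM μ x x :=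
    Classical.epsilon_spec
      (p := fun T : Matrix (Fin m) (Fin m) ℝ => T.PosSemidef ∧ T * T = covM μ x x)
      (by open scoped MatrixOrder in exact ⟨CFC.sqrt (covM μ x x), (CFC.sqrt_nonneg _).posSemidef, CFC.sqrt_mul_sqrt_self _ hxx_psd.nonneg⟩)
  have hR : (msqrtM (covM μ z z)).PosSemidef
      ∧ msqrtM (covM μ z z) * msqrtM (covM μ z z) = covM μ z z :=
    Classical.epsilon_spec
      (p := fun T : Matrix (Fin q) (Fin q) ℝ => T.PosSemidef ∧ T * T = covM μ z z)
      (by open scoped MatrixOrder in exact ⟨CFC.sqrt (covM μ z z), (CFC.sqrt_nonneg _).posSemidef, CFC.sqrt_mul_sqrt_self _ hzz_psd.nonneg⟩)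
  set Q := msqrtM (covM μ x x) with hQdef
  set R := msqrtM (covM μ z z) with hRdef
  have hB : IsMoorePenrose R (mpinv R) :=
    Classical.epsilon_spec (exists_mp R hR.1.1)
  set B := mpinv R with hBdef
  have hQs : Qᵀ = Q := by
    rw [← conjTranspose_eq_transpose_of_trivial]; exact hQ.1.1
  have hRs : Rᵀ = R := by
    rw [← conjTranspose_eq_transpose_of_trivial]; exact hR.1.1
  have hRM : R * (1 - B * R) = 0 := by
    rw [Matrix.mul_sub, Matrix.mul_one, ← Matrix.mul_assoc, hB.1, sub_self]
  have hZM : covM μ z z * (1 - B * R) = 0 := by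
    rw [← hR.2, Matrix.mul_assoc, hRM, Matrix.mul_zero]
  have hEM : covM μ x z * (1 - B * R) = 0 := by
    ext i j
    have hv : covM μ z z *ᵥ (fun k => (1 - B * R) k j) = 0 := by
      funext l
      simpa [mulVec, dotProduct, Matrix.mul_apply] using congrFun (congrFun hZM l) j
    have h6 := cov_kernel hx hz _ hv i
    simpa [Matrix.mul_apply] using h6
  have hkey : covM μ x z * (B * R) = covM μ x z := by
    rw [Matrix.mul_sub, Matrix.mul_one] at hEM
    exact (sub_eq_zero.mp hEM).symm
  rw [sqnorm_expand hx hz S,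
    matrix_side (covM μ x x) Q (covM μ x z) S (covM μ z z) R B hQs hQ.2 hRs hR.2 hkey]
  have t1 : Matrix.trace (covM μ x x) = ∑ i, covM μ x x i i := by
    simp [Matrix.trace, Matrix.diag]
  have t2 : Matrix.trace (covM μ x z * Sᵀ) = ∑ i, ∑ j, S i j * covM μ x z i j := by
    simp only [Matrix.trace, Matrix.diag, Matrix.mul_apply, Matrix.transpose_apply]
    exact Finset.sum_congr rfl fun i _ => Finset.sum_congr rfl fun j _ => mul_comm _ _
  have t3 : Matrix.trace (S * covM μ z z * Sᵀ)
      = ∑ i, ∑ j, ∑ k, S i j * S i k * covM μ z z j k := by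
    simp only [Matrix.trace, Matrix.diag, Matrix.mul_apply, Matrix.transpose_apply,
      Finset.sum_mul]
    refine Finset.sum_congr rfl fun i _ => ?_
    rw [Finset.sum_comm]
    exact Finset.sum_congr rfl fun k _ => Finset.sum_congr rfl fun j _ => by ring
  rw [t1, t2, t3]
end
end

section
/- Let x ∈ L²(Ω, ℝ^m) and z ∈ L²(Ω, ℝ^q). Then ‖x − E_{xz}(E_{zz})^† z‖²_Ω = tr(E_{xx}) − ‖E_{xz}(E_{zz}^{1/2})^†‖², where ‖·‖ is the Frobenius norm. -/
open MeasureTheory Matrix Finset Filter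

noncomputable section

/-! ### Auxiliary lemmas on the Moore–Penrose pseudoinverse -/

lemma mp_transpose {m n : ℕ} {A : Matrix (Fin m) (Fin n) ℝ} {B : Matrix (Fin n) (Fin m) ℝ}
    (h : IsMoorePenrose A B) : IsMoorePenrose Aᵀ Bᵀ := by
  obtain ⟨h1, h2, h3, h4⟩ := h
  refine ⟨?_, ?_, ?_, ?_⟩
  · calc Aᵀ * Bᵀ * Aᵀ = (A * (B * A))ᵀ := by rw [transpose_mul, transpose_mul]
    _ = (A * B * A)ᵀ := by rw [Matrix.mul_assoc]
    _ = Aᵀ := by rw [h1]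
  · calc Bᵀ * Aᵀ * Bᵀ = (B * (A * B))ᵀ := by rw [transpose_mul, transpose_mul]
    _ = (B * A * B)ᵀ := by rw [Matrix.mul_assoc]
    _ = Bᵀ := by rw [h2]
  · calc (Aᵀ * Bᵀ)ᵀ = ((B * A)ᵀ)ᵀ := by simp
    _ = B * A := transpose_transpose _
    _ = (B * A)ᵀ := h4.symm
    _ = Aᵀ * Bᵀ := transpose_mul _ _
  · calc (Bᵀ * Aᵀ)ᵀ = ((A * B)ᵀ)ᵀ := by simp
    _ = A * B := transpose_transpose _
    _ = (A * B)ᵀ := h3.symm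
    _ = Bᵀ * Aᵀ := transpose_mul _ _

lemma mp_unique {m n : ℕ} {A : Matrix (Fin m) (Fin n) ℝ} {B C : Matrix (Fin n) (Fin m) ℝ}
    (hB : IsMoorePenrose A B) (hC : IsMoorePenrose A C) : B = C := by
  obtain ⟨hB1, hB2, hB3, hB4⟩ := hB
  obtain ⟨hC1, hC2, hC3, hC4⟩ := hC
  have hAB : A * B = A * C := by
    calc A * B = (A * C * A) * B := by rw [hC1]
    _ = (A * C) * (A * B) := by simp only [Matrix.mul_assoc]
    _ = (A * C)ᵀ * (A * B)ᵀ := by rw [hB3, hC3]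
    _ = ((A * B) * (A * C))ᵀ := (transpose_mul _ _).symm
    _ = ((A * B * A) * C)ᵀ := by simp only [Matrix.mul_assoc]
    _ = (A * C)ᵀ := by rw [hB1]
    _ = A * C := hC3
  have hBA : B * A = C * A := by
    calc B * A = B * (A * C * A) := by rw [hC1]
    _ = (B * A) * (C * A) := by simp only [Matrix.mul_assoc]
    _ = (B * A)ᵀ * (C * A)ᵀ := by rw [hB4, hC4]
    _ = ((C * A) * (B * A))ᵀ := (transpose_mul _ _).symm
    _ = (C * (A * B * A))ᵀ := by simp only [Matrix.mul_assoc]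
    _ = (C * A)ᵀ := by rw [hB1]
    _ = C * A := hC4
  calc B = B * A * B := hB2.symm
  _ = C * A * B := by rw [hBA]
  _ = C * (A * B) := by simp only [Matrix.mul_assoc]
  _ = C * (A * C) := by rw [hAB]
  _ = C * A * C := by simp only [Matrix.mul_assoc]
  _ = C := hC2

lemma mp_sq {n : ℕ} {S T : Matrix (Fin n) (Fin n) ℝ} (h : IsMoorePenrose S T)
    (hS : Sᵀ = S) (hT : Tᵀ = T) : IsMoorePenrose (S * S) (T * T) := by
  obtain ⟨h1, h2, h3, h4⟩ := h
  have hc : S * T = T * S := by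
    calc S * T = (S * T)ᵀ := h3.symm
    _ = Tᵀ * Sᵀ := transpose_mul _ _
    _ = T * S := by rw [hS, hT]
  have hSSTT : S * S * (T * T) = S * T := by
    calc S * S * (T * T) = S * (S * T) * T := by simp only [Matrix.mul_assoc]
    _ = S * (T * S) * T := by rw [hc]
    _ = (S * T * S) * T := by simp only [Matrix.mul_assoc]
    _ = S * T := by rw [h1]
  have hTTSS : T * T * (S * S) = T * S := by
    calc T * T * (S * S) = T * (T * S) * S := by simp only [Matrix.mul_assoc]
    _ = T * (S * T) * S := by rw [hc]
    _ = (T * S * T) * S := by simp only [Matrix.mul_assoc]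
    _ = T * S := by rw [h2]
  refine ⟨?_, ?_, ?_, ?_⟩
  · calc S * S * (T * T) * (S * S) = (S * T) * (S * S) := by rw [hSSTT]
    _ = (S * T * S) * S := by simp only [Matrix.mul_assoc]
    _ = S * S := by rw [h1]
  · calc T * T * (S * S) * (T * T) = (T * S) * (T * T) := by rw [hTTSS]
    _ = (T * S * T) * T := by simp only [Matrix.mul_assoc]
    _ = T * T := by rw [h2]
  · rw [hSSTT, h3]
  · rw [hTTSS, h4]

lemma mp_exists {n : ℕ} {M : Matrix (Fin n) (Fin n) ℝ} (hM : M.IsHermitian) :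
    ∃ B, IsMoorePenrose M B := by
  set V : Matrix (Fin n) (Fin n) ℝ := (hM.eigenvectorUnitary : Matrix (Fin n) (Fin n) ℝ)
    with hVdef
  have hV1 : V * star V = 1 := (Matrix.mem_unitaryGroup_iff).mp hM.eigenvectorUnitary.2
  have hV2 : star V * V = 1 := (Matrix.mem_unitaryGroup_iff').mp hM.eigenvectorUnitary.2
  set d : Fin n → ℝ := hM.eigenvalues with hddef
  have hspec : M = V * diagonal d * star V := by
    have := hM.spectral_theorem
    simpa using this
  have key : ∀ e f : Fin n → ℝ, (V * diagonal e * star V) * (V * diagonal f * star V)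
      = V * diagonal (fun i => e i * f i) * star V := by
    intro e f
    calc (V * diagonal e * star V) * (V * diagonal f * star V)
        = V * diagonal e * (star V * V) * (diagonal f * star V) := by
          simp only [Matrix.mul_assoc]
      _ = V * (diagonal e * diagonal f) * star V := by
          rw [hV2]; simp only [Matrix.mul_one, Matrix.mul_assoc]
      _ = V * diagonal (fun i => e i * f i) * star V := by
          rw [diagonal_mul_diagonal]
  have hsymm : ∀ e : Fin n → ℝ, (V * diagonal e * star V)ᵀ = V * diagonal e * star V := by
    intro e
    have hstar : star V = Vᵀ := by
      rw [Matrix.star_eq_conjTranspose, conjTranspose]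
      ext i j; simp
    rw [hstar, transpose_mul, transpose_mul, transpose_transpose, diagonal_transpose,
      Matrix.mul_assoc]
  refine ⟨V * diagonal (fun i => (d i)⁻¹) * star V, ?_, ?_, ?_, ?_⟩
  · rw [hspec, key, key]
    congr 2
    funext i
    by_cases h : d i = 0 <;> field_simp [h]
  · rw [hspec, key, key]
    congr 2
    funext i
    by_cases h : d i = 0 <;> field_simp [h]
  · rw [hspec, key, hsymm]
  · rw [hspec, key, hsymm]

/-! ### Auxiliary integrability lemmas -/

lemma my_int_mul {Ω : Type} [MeasurableSpace Ω] {μ : Measure Ω} {f g : Ω → ℝ}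
    (hf : MemLp f 2 μ) (hg : MemLp g 2 μ) : Integrable (fun ω => f ω * g ω) μ := by
  have h : MemLp (g • f) 1 μ := hf.smul hg
  have h2 := memLp_one_iff_integrable.mp h
  have : (g • f) = fun ω => f ω * g ω := by funext ω; simp [mul_comm]
  rwa [this] at h2

lemma my_memℒp_proj {Ω : Type} [MeasurableSpace Ω] {μ : Measure Ω} {k : ℕ}
    {f : Ω → Fin k → ℝ} (hf : MemLp f 2 μ) (i : Fin k) :
    MemLp (fun ω => f ω i) 2 μ :=
  (ContinuousLinearMap.proj (R := ℝ) (φ := fun _ : Fin k => ℝ) i).comp_memLp' hf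

lemma covM_posSemidef {Ω : Type} [MeasurableSpace Ω] {μ : Measure Ω} {k : ℕ}
    {z : Ω → Fin k → ℝ} (hz : MemLp z 2 μ) : (covM μ z z).PosSemidef := by
  have hint : ∀ i j, Integrable (fun ω => z ω i * z ω j) μ := fun i j =>
    my_int_mul (my_memℒp_proj hz i) (my_memℒp_proj hz j)
  rw [Matrix.posSemidef_iff_dotProduct_mulVec]
  constructor
  · ext i j
    simp [covM, conjTranspose_apply, mul_comm]
  · intro v
    have : star v ⬝ᵥ (covM μ z z *ᵥ v) = ∫ ω, (∑ i, v i * z ω i) ^ 2 ∂μ := by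
      have expand : ∀ ω, (∑ i, v i * z ω i) ^ 2
          = ∑ i, ∑ j, v i * v j * (z ω i * z ω j) := by
        intro ω
        rw [sq, Finset.sum_mul_sum]
        exact Finset.sum_congr rfl fun i _ => Finset.sum_congr rfl fun j _ => by ring
      rw [MeasureTheory.integral_congr_ae (Filter.Eventually.of_forall expand)]
      rw [MeasureTheory.integral_finset_sum _ fun i _ =>
        (integrable_finset_sum _ fun j _ => ((hint i j).const_mul _))]
      simp only [dotProduct, mulVec, covM, star, Pi.star_apply, star_trivial]
      refine Finset.sum_congr rfl fun i _ => ?_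
      rw [MeasureTheory.integral_finset_sum _ fun j _ => ((hint i j).const_mul _)]
      rw [Finset.mul_sum]
      refine Finset.sum_congr rfl fun j _ => ?_
      rw [MeasureTheory.integral_const_mul]
      simp only [of_apply, id]
      ring
    rw [this]
    exact integral_nonneg fun ω => sq_nonneg _

/-- `‖x − E_{xz}(E_{zz})^† z‖²_Ω = tr(E_{xx}) − ‖E_{xz}(E_{zz}^{1/2})^†‖²`. -/
theorem stmt14 {Ω : Type} [MeasurableSpace Ω] (μ : Measure Ω) [IsProbabilityMeasure μ]
    {m q : ℕ} (x : Ω → Fin m → ℝ) (z : Ω → Fin q → ℝ)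
    (hx : MemLp x 2 μ) (hz : MemLp z 2 μ) :
    sqnormOm μ (fun ω => x ω - (covM μ x z * mpinv (covM μ z z)) *ᵥ z ω)
      = (covM μ x x).trace - frobSq (covM μ x z * mpinv (msqrtM (covM μ z z))) := by
  classical
  have hxzint : ∀ i j, Integrable (fun ω => x ω i * z ω j) μ := fun i j =>
    my_int_mul (my_memℒp_proj hx i) (my_memℒp_proj hz j)
  have hzzint : ∀ i j, Integrable (fun ω => z ω i * z ω j) μ := fun i j =>
    my_int_mul (my_memℒp_proj hz i) (my_memℒp_proj hz j)
  have hxxint : ∀ i j, Integrable (fun ω => x ω i * x ω j) μ := fun i j =>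
    my_int_mul (my_memℒp_proj hx i) (my_memℒp_proj hx j)
  set A : Matrix (Fin m) (Fin q) ℝ := covM μ x z with hAdef
  set M : Matrix (Fin q) (Fin q) ℝ := covM μ z z with hMdef
  have hMpsd : M.PosSemidef := covM_posSemidef hz
  have hMherm : M.IsHermitian := hMpsd.1
  have hMsymm : Mᵀ = M := by
    conv_rhs => rw [← hMherm]
    ext i j
    simp [conjTranspose_apply]
  have hB : IsMoorePenrose M (mpinv M) := Classical.epsilon_spec (mp_exists hMherm)
  set B : Matrix (Fin q) (Fin q) ℝ := mpinv M with hBdef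
  have hBsymm : Bᵀ = B := by
    have h1 : IsMoorePenrose M Bᵀ := by
      have := mp_transpose hB
      rwa [hMsymm] at this
    exact mp_unique h1 hB
  have hSex : ∃ S : Matrix (Fin q) (Fin q) ℝ, S.PosSemidef ∧ S * S = M :=
    open scoped MatrixOrder in
    ⟨CFC.sqrt M, (CFC.sqrt_nonneg M).posSemidef, CFC.sqrt_mul_sqrt_self M hMpsd.nonneg⟩
  have hS : (msqrtM M).PosSemidef ∧ msqrtM M * msqrtM M = M := Classical.epsilon_spec hSex
  set S : Matrix (Fin q) (Fin q) ℝ := msqrtM M with hSdef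
  have hSherm : S.IsHermitian := hS.1.1
  have hSsymm : Sᵀ = S := by
    conv_rhs => rw [← hSherm]
    ext i j
    simp [conjTranspose_apply]
  have hT : IsMoorePenrose S (mpinv S) := Classical.epsilon_spec (mp_exists hSherm)
  set T : Matrix (Fin q) (Fin q) ℝ := mpinv S with hTdef
  have hTsymm : Tᵀ = T := by
    have h1 : IsMoorePenrose S Tᵀ := by
      have := mp_transpose hT
      rwa [hSsymm] at this
    exact mp_unique h1 hT
  have hTT : T * T = B := by
    have h1 : IsMoorePenrose M (T * T) := by
      have := mp_sq hT hSsymm hTsymm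
      rwa [hS.2] at this
    exact mp_unique h1 hB
  set K : Matrix (Fin m) (Fin q) ℝ := A * B with hKdef
  -- the main integral expansion
  have main : sqnormOm μ (fun ω => x ω - K *ᵥ z ω)
      = (∑ j, ∫ ω, x ω j * x ω j ∂μ)
        - 2 * (∑ j, ∑ k, K j k * (∫ ω, x ω j * z ω k ∂μ))
        + (∑ j, ∑ k, ∑ l, K j k * K j l * (∫ ω, z ω k * z ω l ∂μ)) := by
    have expand : ∀ ω, (∑ j, ((x ω - K *ᵥ z ω) j) ^ 2)
        = (∑ j, x ω j * x ω j)
          - 2 * (∑ j, ∑ k, K j k * (x ω j * z ω k))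
          + (∑ j, ∑ k, ∑ l, K j k * K j l * (z ω k * z ω l)) := by
      intro ω
      have hterm : ∀ j, ((x ω - K *ᵥ z ω) j) ^ 2
          = x ω j * x ω j - 2 * (∑ k, K j k * (x ω j * z ω k))
            + (∑ k, ∑ l, K j k * K j l * (z ω k * z ω l)) := by
        intro j
        have hmv : (x ω - K *ᵥ z ω) j = x ω j - ∑ k, K j k * z ω k := by
          simp [mulVec, dotProduct]
        rw [hmv, sub_sq]
        have h1 : x ω j * (∑ k, K j k * z ω k) = ∑ k, K j k * (x ω j * z ω k) := by
          rw [Finset.mul_sum]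
          exact Finset.sum_congr rfl fun k _ => by ring
        have h2 : (∑ k, K j k * z ω k) ^ 2 = ∑ k, ∑ l, K j k * K j l * (z ω k * z ω l) := by
          rw [sq, Finset.sum_mul_sum]
          exact Finset.sum_congr rfl fun k _ => Finset.sum_congr rfl fun l _ => by ring
        rw [← h1, ← h2]
        ring
      rw [Finset.sum_congr rfl fun j _ => hterm j, Finset.sum_add_distrib,
        Finset.sum_sub_distrib, ← Finset.mul_sum]
    have I1 : Integrable (fun ω => ∑ j, x ω j * x ω j) μ :=
      integrable_finset_sum _ fun j _ => hxxint j j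
    have I2 : Integrable (fun ω => ∑ j, ∑ k, K j k * (x ω j * z ω k)) μ :=
      integrable_finset_sum _ fun j _ =>
        integrable_finset_sum _ fun k _ => (hxzint j k).const_mul _
    have I3 : Integrable (fun ω => ∑ j, ∑ k, ∑ l, K j k * K j l * (z ω k * z ω l)) μ :=
      integrable_finset_sum _ fun j _ => integrable_finset_sum _ fun k _ =>
        integrable_finset_sum _ fun l _ => (hzzint k l).const_mul _
    have e1 : (∫ ω, ∑ j, x ω j * x ω j ∂μ) = ∑ j, ∫ ω, x ω j * x ω j ∂μ :=
      MeasureTheory.integral_finset_sum _ fun j _ => hxxint j j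
    have e2 : (∫ ω, ∑ j, ∑ k, K j k * (x ω j * z ω k) ∂μ)
        = ∑ j, ∑ k, K j k * (∫ ω, x ω j * z ω k ∂μ) := by
      refine (MeasureTheory.integral_finset_sum _ fun j _ =>
        integrable_finset_sum _ fun k _ => (hxzint j k).const_mul _).trans ?_
      refine Finset.sum_congr rfl fun j _ => ?_
      refine (MeasureTheory.integral_finset_sum _ fun k _ => (hxzint j k).const_mul _).trans ?_
      exact Finset.sum_congr rfl fun k _ => MeasureTheory.integral_const_mul _ _
    have e3 : (∫ ω, ∑ j, ∑ k, ∑ l, K j k * K j l * (z ω k * z ω l) ∂μ)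
        = ∑ j, ∑ k, ∑ l, K j k * K j l * (∫ ω, z ω k * z ω l ∂μ) := by
      refine (MeasureTheory.integral_finset_sum _ fun j _ => integrable_finset_sum _ fun k _ =>
        integrable_finset_sum _ fun l _ => (hzzint k l).const_mul _).trans ?_
      refine Finset.sum_congr rfl fun j _ => ?_
      refine (MeasureTheory.integral_finset_sum _ fun k _ =>
        integrable_finset_sum _ fun l _ => (hzzint k l).const_mul _).trans ?_
      refine Finset.sum_congr rfl fun k _ => ?_
      refine (MeasureTheory.integral_finset_sum _ fun l _ => (hzzint k l).const_mul _).trans ?_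
      exact Finset.sum_congr rfl fun l _ => MeasureTheory.integral_const_mul _ _
    have h12 : Integrable (fun ω => (∑ j, x ω j * x ω j)
        - 2 * (∑ j, ∑ k, K j k * (x ω j * z ω k))) μ := I1.sub (I2.const_mul 2)
    unfold sqnormOm
    rw [MeasureTheory.integral_congr_ae (Filter.Eventually.of_forall expand)]
    rw [MeasureTheory.integral_add h12 I3,
      MeasureTheory.integral_sub I1 (I2.const_mul 2),
      MeasureTheory.integral_const_mul, e1, e2, e3]
  rw [main]
  -- trace of covM x x
  have htr : (covM μ x x).trace = ∑ j, ∫ ω, x ω j * x ω j ∂μ := by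
    simp [Matrix.trace, Matrix.diag, covM]
  -- the cross term equals trace (K * Aᵀ)
  have ht2 : (∑ j, ∑ k, K j k * (∫ ω, x ω j * z ω k ∂μ)) = (K * Aᵀ).trace := by
    simp only [Matrix.trace, Matrix.diag_apply, Matrix.mul_apply, Matrix.transpose_apply]
    refine Finset.sum_congr rfl fun j _ => Finset.sum_congr rfl fun k _ => ?_
    rfl
  -- the quadratic term equals trace (K * M * Kᵀ)
  have ht3 : (∑ j, ∑ k, ∑ l, K j k * K j l * (∫ ω, z ω k * z ω l ∂μ))
      = (K * M * Kᵀ).trace := by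
    simp only [Matrix.trace, Matrix.diag_apply, Matrix.mul_apply, Matrix.transpose_apply,
      Finset.sum_mul]
    refine Finset.sum_congr rfl fun j _ => ?_
    rw [Finset.sum_comm]
    refine Finset.sum_congr rfl fun k _ => Finset.sum_congr rfl fun l _ => ?_
    simp only [hMdef, covM, Matrix.of_apply]
    ring
  have hKMK : K * M * Kᵀ = K * Aᵀ := by
    have hKt : Kᵀ = B * Aᵀ := by rw [hKdef, transpose_mul, hBsymm]
    rw [hKt, hKdef]
    calc A * B * M * (B * Aᵀ) = A * (B * M * B) * Aᵀ := by simp only [Matrix.mul_assoc]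
    _ = A * B * Aᵀ := by rw [hB.2.1]
  have hfrob : frobSq (A * T) = (K * Aᵀ).trace := by
    have hATS : A * T * (A * T)ᵀ = K * Aᵀ := by
      rw [transpose_mul, hTsymm]
      calc A * T * (T * Aᵀ) = A * (T * T) * Aᵀ := by simp only [Matrix.mul_assoc]
      _ = A * B * Aᵀ := by rw [hTT]
      _ = K * Aᵀ := by rw [hKdef]
    rw [← hATS]
    simp only [frobSq, Matrix.trace, Matrix.diag_apply, Matrix.mul_apply,
      Matrix.transpose_apply, sq]
  rw [htr, ht2, ht3, hKMK, hfrob]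
  ring
end
end
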